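/- Let 2 ≤ q < ∞ and let F be a Banach space having cotype q with constant K. Then for all Banach spaces E_1,…,E_n, every continuous n-linear operator T : E_1 × ⋯ × E_n → F is multiple (q;1,…,1)-summing with constant K^n ‖T‖: for all finite families x_j^{(k)} ∈ E_k, (∑_{j_1,…,j_n} ‖T(x_{j_1}^{(1)},…,x_{j_n}^{(n)})‖^q)^{1/q} ≤ K^n ‖T‖ ∏_{k=1}^n ‖(x_j^{(k)})_j‖_{w,1}. -/

import Mathlib

open scoped BigOperators

/-- The weak ℓ_p norm of a finite family `x` in a normed space `E`. -/
noncomputable def weakNorm (𝕜 : Type*) [RCLike 𝕜] {E : Type*} [NormedAddCommGroup E]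
    [NormedSpace 𝕜 E] (p : ℝ) {m : ℕ} (x : Fin m → E) : ℝ :=
  ⨆ φ : {φ : E →L[𝕜] 𝕜 // ‖φ‖ ≤ 1}, (∑ j, ‖φ.1 (x j)‖ ^ p) ^ (1 / p)

/-- `E` has cotype `q` with constant `K`. -/
def HasCotype (E : Type*) [NormedAddCommGroup E] (q K : ℝ) : Prop :=
  ∀ (n : ℕ) (x : Fin n → E),
    (∑ i, ‖x i‖ ^ q) ^ (1 / q) ≤
      K * (((2 : ℝ) ^ n)⁻¹ *
        ∑ ε : Fin n → Bool, ‖∑ i, (if ε i then x i else -x i)‖ ^ 2) ^ ((1 : ℝ) / 2)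

lemma weakNorm_nonneg (𝕜 : Type*) [RCLike 𝕜] {E : Type*} [NormedAddCommGroup E]
    [NormedSpace 𝕜 E] (p : ℝ) {m : ℕ} (x : Fin m → E) : 0 ≤ weakNorm 𝕜 p x :=
  Real.iSup_nonneg fun _ => Real.rpow_nonneg
    (Finset.sum_nonneg fun _ _ => Real.rpow_nonneg (norm_nonneg _) _) _

lemma norm_sum_smul_le_weakNorm {𝕜 : Type*} [RCLike 𝕜] {E : Type*} [NormedAddCommGroup E]
    [NormedSpace 𝕜 E] {m : ℕ} (x : Fin m → E) (c : Fin m → 𝕜) (hc : ∀ i, ‖c i‖ ≤ 1) :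
    ‖∑ i, c i • x i‖ ≤ weakNorm 𝕜 1 x := by
  set v := ∑ i, c i • x i with hv
  rcases eq_or_ne v 0 with h | h
  · rw [h, norm_zero]; exact weakNorm_nonneg 𝕜 1 x
  obtain ⟨φ, hφ1, hφv⟩ := exists_dual_vector 𝕜 v (norm_ne_zero_iff.mpr h)
  have hbdd : BddAbove (Set.range fun φ : {φ : E →L[𝕜] 𝕜 // ‖φ‖ ≤ 1} =>
      (∑ j, ‖φ.1 (x j)‖ ^ (1:ℝ)) ^ (1 / (1:ℝ))) := by
    refine ⟨∑ j, ‖x j‖, ?_⟩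
    rintro _ ⟨ψ, rfl⟩
    simp only [Real.rpow_one, one_div_one]
    refine Finset.sum_le_sum fun j _ => ?_
    calc ‖ψ.1 (x j)‖ ≤ ‖ψ.1‖ * ‖x j‖ := ψ.1.le_opNorm _
      _ ≤ 1 * ‖x j‖ := by gcongr; exact ψ.2
      _ = ‖x j‖ := one_mul _
  have key : ‖v‖ ≤ (∑ j, ‖φ (x j)‖ ^ (1:ℝ)) ^ (1 / (1:ℝ)) := by
    simp only [Real.rpow_one, one_div_one]
    have : ‖v‖ = ‖φ v‖ := by
      rw [hφv]; simp [RCLike.norm_ofReal, abs_of_nonneg (norm_nonneg v)]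
    rw [this, hv, map_sum]
    calc ‖∑ i, φ (c i • x i)‖ ≤ ∑ i, ‖φ (c i • x i)‖ := norm_sum_le _ _
      _ ≤ ∑ i, ‖φ (x i)‖ := by
          refine Finset.sum_le_sum fun i _ => ?_
          rw [map_smul, norm_smul]
          calc ‖c i‖ * ‖φ (x i)‖ ≤ 1 * ‖φ (x i)‖ := by gcongr; exact hc i
            _ = ‖φ (x i)‖ := one_mul _
  exact key.trans (le_ciSup hbdd (⟨φ, le_of_eq hφ1⟩ : {φ : E →L[𝕜] 𝕜 // ‖φ‖ ≤ 1}))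

lemma hasCotype_rpow {F : Type*} [NormedAddCommGroup F] {q K : ℝ} (hq : 2 ≤ q) (hK : 0 ≤ K)
    (hcot : HasCotype F q K) {m : ℕ} (z : Fin m → F) :
    ∑ i, ‖z i‖ ^ q ≤
      K ^ q * (((2:ℝ) ^ m)⁻¹ * ∑ ε : Fin m → Bool, ‖∑ i, (if ε i then z i else -z i)‖ ^ q) := by
  have hq0 : (0:ℝ) < q := lt_of_lt_of_le two_pos hq
  set a : (Fin m → Bool) → ℝ := fun ε => ‖∑ i, (if ε i then z i else -z i)‖ with ha
  set w : ℝ := ((2:ℝ) ^ m)⁻¹ with hw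
  have hw0 : 0 ≤ w := by positivity
  have hwsum : ∑ _ε : Fin m → Bool, w = 1 := by
    rw [Finset.sum_const, nsmul_eq_mul]
    simp only [Finset.card_univ, Fintype.card_fun, Fintype.card_bool, Fintype.card_fin, hw]
    rw [Nat.cast_pow]
    norm_num
  set S : ℝ := ∑ i, ‖z i‖ ^ q with hS
  have hS0 : 0 ≤ S := Finset.sum_nonneg fun _ _ => Real.rpow_nonneg (norm_nonneg _) _
  set B : ℝ := ∑ ε : Fin m → Bool, w * a ε ^ q with hB
  have hB0 : 0 ≤ B := Finset.sum_nonneg fun ε _ =>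
    mul_nonneg hw0 (Real.rpow_nonneg (norm_nonneg _) _)
  have h1 : S ^ (1/q) ≤ K * (∑ ε : Fin m → Bool, w * a ε ^ 2) ^ ((1:ℝ)/2) := by
    have := hcot m z
    rwa [Finset.mul_sum] at this
  have h2 : ∑ ε : Fin m → Bool, w * a ε ^ 2 ≤ B ^ ((2:ℝ)/q) := by
    have hp : (1:ℝ) ≤ q / 2 := by rw [le_div_iff₀ (by norm_num : (0:ℝ) < 2)]; linarith
    have := Real.arith_mean_le_rpow_mean (s := Finset.univ) (fun _ => w) (fun ε => a ε ^ 2)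
      (fun _ _ => hw0) hwsum (fun ε _ => by positivity) (p := q/2) hp
    have heq : ∀ ε : Fin m → Bool, (a ε ^ 2) ^ (q/2) = a ε ^ q := by
      intro ε
      rw [← Real.rpow_natCast (a ε) 2, ← Real.rpow_mul (norm_nonneg _)]
      norm_num
      ring_nf
      rfl
    calc ∑ ε : Fin m → Bool, w * a ε ^ 2
        ≤ (∑ ε : Fin m → Bool, w * (a ε ^ 2) ^ (q/2)) ^ (1 / (q/2)) := this
      _ = B ^ ((2:ℝ)/q) := by
          rw [one_div_div]
          congr 1
          exact Finset.sum_congr rfl fun ε _ => by rw [heq ε]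
  have h3 : S ^ (1/q) ≤ K * B ^ (1/q) := by
    refine h1.trans ?_
    have : (∑ ε : Fin m → Bool, w * a ε ^ 2) ^ ((1:ℝ)/2) ≤ (B ^ ((2:ℝ)/q)) ^ ((1:ℝ)/2) := by
      apply Real.rpow_le_rpow (Finset.sum_nonneg fun ε _ => by positivity) h2 (by norm_num)
    calc K * (∑ ε : Fin m → Bool, w * a ε ^ 2) ^ ((1:ℝ)/2)
        ≤ K * (B ^ ((2:ℝ)/q)) ^ ((1:ℝ)/2) := mul_le_mul_of_nonneg_left this hK
      _ = K * B ^ (1/q) := by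
          rw [← Real.rpow_mul hB0]
          congr 1
          ring
  have h4 : S = (S ^ (1/q)) ^ q := by
    rw [← Real.rpow_mul hS0, one_div_mul_cancel (ne_of_gt hq0), Real.rpow_one]
  calc S = (S ^ (1/q)) ^ q := h4
    _ ≤ (K * B ^ (1/q)) ^ q :=
        Real.rpow_le_rpow (Real.rpow_nonneg hS0 _) h3 (le_of_lt hq0)
    _ = K ^ q * B := by
        rw [Real.mul_rpow hK (Real.rpow_nonneg hB0 _), ← Real.rpow_mul hB0,
          one_div_mul_cancel (ne_of_gt hq0), Real.rpow_one]
    _ = K ^ q * (w * ∑ ε : Fin m → Bool, a ε ^ q) := by rw [hB, ← Finset.mul_sum]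
    _ = K ^ q * (((2:ℝ) ^ m)⁻¹ * ∑ ε : Fin m → Bool, ‖∑ i, (if ε i then z i else -z i)‖ ^ q) := rfl

lemma sum_sum_update {ι : Type*} [Fintype ι] [DecidableEq ι] {π : ι → Type*}
    [∀ i, Fintype (π i)] (k : ι) (g : (∀ i, π i) → ℝ) :
    ∑ j : ∀ i, π i, ∑ a : π k, g (Function.update j k a)
      = (Fintype.card (π k) : ℝ) * ∑ j : ∀ i, π i, g j := by
  let e : ((∀ i, π i) × π k) ≃ ((∀ i, π i) × π k) :=
  { toFun := fun p => (Function.update p.1 k p.2, p.1 k)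
    invFun := fun p => (Function.update p.1 k p.2, p.1 k)
    left_inv := by
      rintro ⟨j, a⟩
      ext i
      · by_cases h : i = k
        · subst h; simp
        · simp [Function.update_of_ne h]
      · simp
    right_inv := by
      rintro ⟨j, a⟩
      ext i
      · by_cases h : i = k
        · subst h; simp
        · simp [Function.update_of_ne h]
      · simp }
  have h1 : ∑ p : (∀ i, π i) × π k, g (Function.update p.1 k p.2)
      = ∑ p : (∀ i, π i) × π k, g p.1 := by
    exact Fintype.sum_equiv e _ _ (fun p => rfl)
  calc ∑ j : ∀ i, π i, ∑ a : π k, g (Function.update j k a)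
      = ∑ p : (∀ i, π i) × π k, g (Function.update p.1 k p.2) := by
        rw [Fintype.sum_prod_type]
    _ = ∑ p : (∀ i, π i) × π k, g p.1 := h1
    _ = ∑ j : ∀ i, π i, ∑ _a : π k, g j := by rw [Fintype.sum_prod_type]
    _ = (Fintype.card (π k) : ℝ) * ∑ j : ∀ i, π i, g j := by
        simp [Finset.sum_const, nsmul_eq_mul, Finset.mul_sum]

/-- The auxiliary family: coordinates in `A` are replaced by signed sums. -/
noncomputable def yy (𝕜 : Type*) [RCLike 𝕜] {n : ℕ} (E : Fin n → Type*)
    [∀ k, NormedAddCommGroup (E k)] [∀ k, NormedSpace 𝕜 (E k)] (m : Fin n → ℕ)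
    (x : ∀ k, Fin (m k) → E k) (A : Finset (Fin n)) (ε : ∀ k, Fin (m k) → Bool)
    (j : ∀ k, Fin (m k)) : ∀ k, E k :=
  fun k => if k ∈ A then ∑ i, (if ε k i then (1:𝕜) else -1) • x k i else x k (j k)

lemma Sig_step (𝕜 : Type*) [RCLike 𝕜] {n : ℕ} (E : Fin n → Type*)
    [∀ k, NormedAddCommGroup (E k)] [∀ k, NormedSpace 𝕜 (E k)]
    (F : Type*) [NormedAddCommGroup F] [NormedSpace 𝕜 F]
    (q K : ℝ) (hq : 2 ≤ q) (hK : 0 ≤ K) (hcot : HasCotype F q K)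
    (T : ContinuousMultilinearMap 𝕜 E F) (m : Fin n → ℕ) (x : ∀ k, Fin (m k) → E k)
    (A : Finset (Fin n)) (k₀ : Fin n) (hk₀ : k₀ ∉ A) (hm0 : 0 < m k₀) :
    ∑ ε : ∀ k, Fin (m k) → Bool, ∑ j : ∀ k, Fin (m k), ‖T (yy 𝕜 E m x A ε j)‖ ^ q
      ≤ K ^ q * ((m k₀ : ℝ))⁻¹ *
        ∑ ε : ∀ k, Fin (m k) → Bool, ∑ j : ∀ k, Fin (m k),
          ‖T (yy 𝕜 E m x (insert k₀ A) ε j)‖ ^ q := by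
  classical
  have hmR : (0:ℝ) < (m k₀ : ℝ) := by exact_mod_cast hm0
  -- pointwise key inequality
  have key : ∀ (ε : ∀ k, Fin (m k) → Bool) (j : ∀ k, Fin (m k)),
      ∑ i : Fin (m k₀), ‖T (yy 𝕜 E m x A ε (Function.update j k₀ i))‖ ^ q
        ≤ K ^ q * (((2:ℝ) ^ (m k₀))⁻¹ *
            ∑ δ : Fin (m k₀) → Bool,
              ‖T (yy 𝕜 E m x (insert k₀ A) (Function.update ε k₀ δ) j)‖ ^ q) := by
    intro ε j
    have h := hasCotype_rpow hq hK hcot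
      (fun i : Fin (m k₀) => T (Function.update (yy 𝕜 E m x A ε j) k₀ (x k₀ i)))
    have e1 : ∀ i, yy 𝕜 E m x A ε (Function.update j k₀ i)
        = Function.update (yy 𝕜 E m x A ε j) k₀ (x k₀ i) := by
      intro i; funext k
      by_cases hk : k = k₀
      · subst hk; simp [yy, hk₀]
      · simp [yy, Function.update_of_ne hk]
    have e2 : ∀ δ : Fin (m k₀) → Bool,
        (∑ i, (if δ i then T (Function.update (yy 𝕜 E m x A ε j) k₀ (x k₀ i))
          else -T (Function.update (yy 𝕜 E m x A ε j) k₀ (x k₀ i))))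
        = T (yy 𝕜 E m x (insert k₀ A) (Function.update ε k₀ δ) j) := by
      intro δ
      have s1 : ∀ i, (if δ i then T (Function.update (yy 𝕜 E m x A ε j) k₀ (x k₀ i))
          else -T (Function.update (yy 𝕜 E m x A ε j) k₀ (x k₀ i)))
          = T (Function.update (yy 𝕜 E m x A ε j) k₀ ((if δ i then (1:𝕜) else -1) • x k₀ i)) := by
        intro i
        rw [T.map_update_smul]
        by_cases h : δ i <;> simp [h]
      have msum := (T.toMultilinearMap).map_update_sum (Finset.univ) k₀
        (fun i => (if δ i then (1:𝕜) else -1) • x k₀ i) (yy 𝕜 E m x A ε j)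
      simp only [ContinuousMultilinearMap.coe_coe] at msum
      rw [Finset.sum_congr rfl (fun i _ => s1 i), ← msum]
      congr 1
      funext k
      by_cases hk : k = k₀
      · subst hk; simp [yy]
      · rw [Function.update_of_ne hk]
        by_cases hkA : k ∈ A
        · simp [yy, hkA, Finset.mem_insert, hk, Function.update_of_ne hk]
        · simp [yy, hkA, Finset.mem_insert, hk, Function.update_of_ne hk]
    calc ∑ i : Fin (m k₀), ‖T (yy 𝕜 E m x A ε (Function.update j k₀ i))‖ ^ q
        = ∑ i : Fin (m k₀), ‖T (Function.update (yy 𝕜 E m x A ε j) k₀ (x k₀ i))‖ ^ q := by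
          exact Finset.sum_congr rfl fun i _ => by rw [e1 i]
      _ ≤ K ^ q * (((2:ℝ) ^ (m k₀))⁻¹ *
            ∑ δ : Fin (m k₀) → Bool,
              ‖∑ i, (if δ i then T (Function.update (yy 𝕜 E m x A ε j) k₀ (x k₀ i))
                else -T (Function.update (yy 𝕜 E m x A ε j) k₀ (x k₀ i)))‖ ^ q) := h
      _ = K ^ q * (((2:ℝ) ^ (m k₀))⁻¹ *
            ∑ δ : Fin (m k₀) → Bool,
              ‖T (yy 𝕜 E m x (insert k₀ A) (Function.update ε k₀ δ) j)‖ ^ q) := by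
          congr 1
          congr 1
          exact Finset.sum_congr rfl fun δ _ => by rw [e2 δ]
  -- counting step 1: expand the j-sum
  have step1 : ∀ ε : ∀ k, Fin (m k) → Bool,
      ∑ j : ∀ k, Fin (m k), ‖T (yy 𝕜 E m x A ε j)‖ ^ q
        = (m k₀ : ℝ)⁻¹ * ∑ j : ∀ k, Fin (m k), ∑ i : Fin (m k₀),
            ‖T (yy 𝕜 E m x A ε (Function.update j k₀ i))‖ ^ q := by
    intro ε
    rw [sum_sum_update (π := fun k => Fin (m k)) k₀ (fun j => ‖T (yy 𝕜 E m x A ε j)‖ ^ q)]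
    rw [Fintype.card_fin, ← mul_assoc, inv_mul_cancel₀ (ne_of_gt hmR), one_mul]
  -- counting step 2: contract the δ-sum
  have step2 : ∀ j : ∀ k, Fin (m k),
      ∑ ε : ∀ k, Fin (m k) → Bool, ∑ δ : Fin (m k₀) → Bool,
          ‖T (yy 𝕜 E m x (insert k₀ A) (Function.update ε k₀ δ) j)‖ ^ q
        = (2:ℝ) ^ (m k₀) * ∑ ε : ∀ k, Fin (m k) → Bool,
            ‖T (yy 𝕜 E m x (insert k₀ A) ε j)‖ ^ q := by
    intro j
    rw [sum_sum_update (π := fun k => Fin (m k) → Bool) k₀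
      (fun ε => ‖T (yy 𝕜 E m x (insert k₀ A) ε j)‖ ^ q)]
    congr 1
    simp [Fintype.card_fun]
  have h2m : (0:ℝ) < (2:ℝ) ^ (m k₀) := by positivity
  calc ∑ ε : ∀ k, Fin (m k) → Bool, ∑ j : ∀ k, Fin (m k), ‖T (yy 𝕜 E m x A ε j)‖ ^ q
      = (m k₀ : ℝ)⁻¹ * ∑ ε : ∀ k, Fin (m k) → Bool, ∑ j : ∀ k, Fin (m k), ∑ i : Fin (m k₀),
          ‖T (yy 𝕜 E m x A ε (Function.update j k₀ i))‖ ^ q := by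
        rw [Finset.mul_sum]
        exact Finset.sum_congr rfl fun ε _ => step1 ε
    _ ≤ (m k₀ : ℝ)⁻¹ * ∑ ε : ∀ k, Fin (m k) → Bool, ∑ j : ∀ k, Fin (m k),
          (K ^ q * (((2:ℝ) ^ (m k₀))⁻¹ *
            ∑ δ : Fin (m k₀) → Bool,
              ‖T (yy 𝕜 E m x (insert k₀ A) (Function.update ε k₀ δ) j)‖ ^ q)) := by
        apply mul_le_mul_of_nonneg_left _ (le_of_lt (inv_pos.mpr hmR))
        exact Finset.sum_le_sum fun ε _ => Finset.sum_le_sum fun j _ => key ε j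
    _ = (m k₀ : ℝ)⁻¹ * (K ^ q * ((2:ℝ) ^ (m k₀))⁻¹ *
          ∑ j : ∀ k, Fin (m k), ∑ ε : ∀ k, Fin (m k) → Bool, ∑ δ : Fin (m k₀) → Bool,
            ‖T (yy 𝕜 E m x (insert k₀ A) (Function.update ε k₀ δ) j)‖ ^ q) := by
        congr 1
        have hsw : ∑ j : ∀ k, Fin (m k), ∑ ε : ∀ k, Fin (m k) → Bool, ∑ δ : Fin (m k₀) → Bool,
            ‖T (yy 𝕜 E m x (insert k₀ A) (Function.update ε k₀ δ) j)‖ ^ q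
            = ∑ ε : ∀ k, Fin (m k) → Bool, ∑ j : ∀ k, Fin (m k), ∑ δ : Fin (m k₀) → Bool,
            ‖T (yy 𝕜 E m x (insert k₀ A) (Function.update ε k₀ δ) j)‖ ^ q := Finset.sum_comm
        rw [hsw, Finset.mul_sum]
        refine Finset.sum_congr rfl fun ε _ => ?_
        rw [Finset.mul_sum]
        exact Finset.sum_congr rfl fun j _ => by ring
    _ = (m k₀ : ℝ)⁻¹ * (K ^ q * ((2:ℝ) ^ (m k₀))⁻¹ *
          ∑ j : ∀ k, Fin (m k), (2:ℝ) ^ (m k₀) * ∑ ε : ∀ k, Fin (m k) → Bool,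
            ‖T (yy 𝕜 E m x (insert k₀ A) ε j)‖ ^ q) := by
        congr 1
        congr 1
        exact Finset.sum_congr rfl fun j _ => step2 j
    _ = K ^ q * ((m k₀ : ℝ))⁻¹ *
          ∑ ε : ∀ k, Fin (m k) → Bool, ∑ j : ∀ k, Fin (m k),
            ‖T (yy 𝕜 E m x (insert k₀ A) ε j)‖ ^ q := by
        have hsw : ∑ j : ∀ k, Fin (m k), ∑ ε : ∀ k, Fin (m k) → Bool,
            ‖T (yy 𝕜 E m x (insert k₀ A) ε j)‖ ^ q
            = ∑ ε : ∀ k, Fin (m k) → Bool, ∑ j : ∀ k, Fin (m k),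
            ‖T (yy 𝕜 E m x (insert k₀ A) ε j)‖ ^ q := Finset.sum_comm
        rw [← Finset.mul_sum, hsw]
        field_simp

/-- **Souza / Pérez-García.** If `F` has cotype `q ∈ [2,∞)` with constant `K`, then every
continuous `n`-linear operator `T : E 0 × ⋯ × E (n-1) → F` is multiple `(q;1,…,1)`-summing
with constant `K^n ‖T‖`. -/
theorem cotype_implies_multiple_summing_with_constant (𝕜 : Type*) [RCLike 𝕜] {n : ℕ}
    (E : Fin n → Type*) [∀ k, NormedAddCommGroup (E k)] [∀ k, NormedSpace 𝕜 (E k)]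
    [∀ k, CompleteSpace (E k)] (F : Type*) [NormedAddCommGroup F] [NormedSpace 𝕜 F]
    [CompleteSpace F] (q K : ℝ) (hq : 2 ≤ q) (hK : 0 ≤ K) (hcot : HasCotype F q K)
    (T : ContinuousMultilinearMap 𝕜 E F) :
    ∀ (m : Fin n → ℕ) (x : ∀ k, Fin (m k) → E k),
      (∑ j : ∀ k, Fin (m k), ‖T (fun k => x k (j k))‖ ^ q) ^ (1 / q) ≤
        K ^ n * ‖T‖ * ∏ k, weakNorm 𝕜 1 (x k) := by
  intro m x
  classical
  have hq0 : (0:ℝ) < q := lt_of_lt_of_le two_pos hq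
  have hwnn : ∀ k, 0 ≤ weakNorm 𝕜 1 (x k) := fun k => weakNorm_nonneg 𝕜 1 (x k)
  have hC0 : 0 ≤ K ^ n * ‖T‖ * ∏ k, weakNorm 𝕜 1 (x k) :=
    mul_nonneg (mul_nonneg (pow_nonneg hK n) (norm_nonneg _))
      (Finset.prod_nonneg fun k _ => hwnn k)
  have hS0 : 0 ≤ ∑ j : ∀ k, Fin (m k), ‖T (fun k => x k (j k))‖ ^ q :=
    Finset.sum_nonneg fun _ _ => Real.rpow_nonneg (norm_nonneg _) _
  suffices hmain : (∑ j : ∀ k, Fin (m k), ‖T (fun k => x k (j k))‖ ^ q) ≤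
      (K ^ n * ‖T‖ * ∏ k, weakNorm 𝕜 1 (x k)) ^ q by
    calc (∑ j : ∀ k, Fin (m k), ‖T (fun k => x k (j k))‖ ^ q) ^ (1/q)
        ≤ ((K ^ n * ‖T‖ * ∏ k, weakNorm 𝕜 1 (x k)) ^ q) ^ (1/q) :=
          Real.rpow_le_rpow hS0 hmain (by positivity)
      _ = K ^ n * ‖T‖ * ∏ k, weakNorm 𝕜 1 (x k) := by
          rw [← Real.rpow_mul hC0, mul_one_div_cancel (ne_of_gt hq0), Real.rpow_one]
  by_cases hm : ∀ k, 0 < m k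
  swap
  · -- some m k = 0 : the sum is empty
    push_neg at hm
    obtain ⟨k₁, hk₁⟩ := hm
    have hk₁' : m k₁ = 0 := by omega
    have hempty : IsEmpty (∀ k, Fin (m k)) :=
      ⟨fun j => absurd (j k₁).isLt (by omega)⟩
    rw [Finset.univ_eq_empty, Finset.sum_empty]
    exact Real.rpow_nonneg hC0 q
  -- main case
  have hKq0 : (0:ℝ) ≤ K ^ q := Real.rpow_nonneg hK q
  have hP2 : (0:ℝ) < ∏ k, ((2:ℝ) ^ (m k)) := Finset.prod_pos fun k _ => by positivity
  have hPm : (0:ℝ) < ∏ k, ((m k : ℝ)) := Finset.prod_pos fun k _ => by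
    exact_mod_cast hm k
  set H : Finset (Fin n) → ℝ := fun A => (∏ k ∈ A, ((m k:ℝ))⁻¹) *
    ∑ ε : ∀ k, Fin (m k) → Bool, ∑ j : ∀ k, Fin (m k), ‖T (yy 𝕜 E m x A ε j)‖ ^ q with hH
  have hHstep : ∀ (A : Finset (Fin n)) (k₀ : Fin n), k₀ ∉ A →
      H A ≤ K ^ q * H (insert k₀ A) := by
    intro A k₀ hk₀
    have h := Sig_step 𝕜 E F q K hq hK hcot T m x A k₀ hk₀ (hm k₀)
    have hP : (0:ℝ) ≤ ∏ k ∈ A, ((m k:ℝ))⁻¹ :=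
      Finset.prod_nonneg fun k _ => inv_nonneg.mpr (Nat.cast_nonneg _)
    simp only [hH]
    calc (∏ k ∈ A, ((m k:ℝ))⁻¹) *
          ∑ ε : ∀ k, Fin (m k) → Bool, ∑ j : ∀ k, Fin (m k), ‖T (yy 𝕜 E m x A ε j)‖ ^ q
        ≤ (∏ k ∈ A, ((m k:ℝ))⁻¹) * (K ^ q * ((m k₀ : ℝ))⁻¹ *
            ∑ ε : ∀ k, Fin (m k) → Bool, ∑ j : ∀ k, Fin (m k),
              ‖T (yy 𝕜 E m x (insert k₀ A) ε j)‖ ^ q) := mul_le_mul_of_nonneg_left h hP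
      _ = K ^ q * ((∏ k ∈ insert k₀ A, ((m k:ℝ))⁻¹) *
            ∑ ε : ∀ k, Fin (m k) → Bool, ∑ j : ∀ k, Fin (m k),
              ‖T (yy 𝕜 E m x (insert k₀ A) ε j)‖ ^ q) := by
          rw [Finset.prod_insert hk₀]; ring
  have hchain : ∀ B : Finset (Fin n), H Bᶜ ≤ (K ^ q) ^ B.card * H Finset.univ := by
    intro B
    induction B using Finset.induction_on with
    | empty => rw [Finset.compl_empty, Finset.card_empty, pow_zero, one_mul]
    | @insert k B hkB ih =>
      have hkc : k ∉ (insert k B)ᶜ := by simp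
      have h1 : insert k ((insert k B)ᶜ) = Bᶜ := by
        ext a
        simp only [Finset.mem_insert, Finset.mem_compl]
        by_cases hak : a = k <;> simp [hak, hkB]
      calc H (insert k B)ᶜ ≤ K ^ q * H (insert k ((insert k B)ᶜ)) := hHstep _ k hkc
        _ = K ^ q * H Bᶜ := by rw [h1]
        _ ≤ K ^ q * ((K ^ q) ^ B.card * H Finset.univ) := mul_le_mul_of_nonneg_left ih hKq0
        _ = (K ^ q) ^ (insert k B).card * H Finset.univ := by
            rw [Finset.card_insert_of_notMem hkB, pow_succ]; ring
  have hfinal1 : H ∅ ≤ (K ^ q) ^ n * H Finset.univ := by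
    have := hchain Finset.univ
    rwa [Finset.compl_univ, Finset.card_univ, Fintype.card_fin] at this
  -- identify H ∅
  have hyy0 : ∀ (ε : ∀ k, Fin (m k) → Bool) (j : ∀ k, Fin (m k)),
      yy 𝕜 E m x ∅ ε j = fun k => x k (j k) := by
    intro ε j; funext k; simp [yy]
  have hcardε : ((Fintype.card (∀ k, Fin (m k) → Bool) : ℕ) : ℝ) = ∏ k, ((2:ℝ) ^ (m k)) := by
    simp [Fintype.card_pi, Fintype.card_fun]
  have hHempty : H ∅ = (∏ k, ((2:ℝ) ^ (m k))) *
      ∑ j : ∀ k, Fin (m k), ‖T (fun k => x k (j k))‖ ^ q := by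
    simp only [hH, Finset.prod_empty, one_mul]
    have : ∀ ε : ∀ k, Fin (m k) → Bool,
        (∑ j : ∀ k, Fin (m k), ‖T (yy 𝕜 E m x ∅ ε j)‖ ^ q)
          = ∑ j : ∀ k, Fin (m k), ‖T (fun k => x k (j k))‖ ^ q := by
      intro ε
      exact Finset.sum_congr rfl fun j _ => by rw [hyy0 ε j]
    rw [Finset.sum_congr rfl fun ε _ => this ε, Finset.sum_const, nsmul_eq_mul,
      Finset.card_univ, hcardε]
  -- bound H univ
  have hC₀0 : (0:ℝ) ≤ ‖T‖ * ∏ k, weakNorm 𝕜 1 (x k) :=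
    mul_nonneg (norm_nonneg _) (Finset.prod_nonneg fun k _ => hwnn k)
  have hterm : ∀ (ε : ∀ k, Fin (m k) → Bool) (j : ∀ k, Fin (m k)),
      ‖T (yy 𝕜 E m x Finset.univ ε j)‖ ^ q ≤ (‖T‖ * ∏ k, weakNorm 𝕜 1 (x k)) ^ q := by
    intro ε j
    refine Real.rpow_le_rpow (norm_nonneg _) ?_ (le_of_lt hq0)
    calc ‖T (yy 𝕜 E m x Finset.univ ε j)‖
        ≤ ‖T‖ * ∏ k, ‖yy 𝕜 E m x Finset.univ ε j k‖ := T.le_opNorm _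
      _ ≤ ‖T‖ * ∏ k, weakNorm 𝕜 1 (x k) := by
          refine mul_le_mul_of_nonneg_left ?_ (norm_nonneg T)
          refine Finset.prod_le_prod (fun k _ => norm_nonneg _) (fun k _ => ?_)
          have : yy 𝕜 E m x Finset.univ ε j k = ∑ i, (if ε k i then (1:𝕜) else -1) • x k i := by
            simp [yy]
          rw [this]
          refine norm_sum_smul_le_weakNorm (x k) _ (fun i => ?_)
          by_cases h : ε k i <;> simp [h]
  have hcardj : ((Fintype.card (∀ k, Fin (m k)) : ℕ) : ℝ) = ∏ k, ((m k : ℝ)) := by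
    simp [Fintype.card_pi]
  have hHuniv : H Finset.univ ≤ (∏ k, ((m k:ℝ))⁻¹) * ((∏ k, ((2:ℝ) ^ (m k))) * (∏ k, ((m k : ℝ))) *
      (‖T‖ * ∏ k, weakNorm 𝕜 1 (x k)) ^ q) := by
    simp only [hH]
    refine mul_le_mul_of_nonneg_left ?_
      (Finset.prod_nonneg fun k _ => inv_nonneg.mpr (Nat.cast_nonneg _))
    calc ∑ ε : ∀ k, Fin (m k) → Bool, ∑ j : ∀ k, Fin (m k),
          ‖T (yy 𝕜 E m x Finset.univ ε j)‖ ^ q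
        ≤ ∑ _ε : ∀ k, Fin (m k) → Bool, ∑ _j : ∀ k, Fin (m k),
            (‖T‖ * ∏ k, weakNorm 𝕜 1 (x k)) ^ q :=
          Finset.sum_le_sum fun ε _ => Finset.sum_le_sum fun j _ => hterm ε j
      _ = (∏ k, ((2:ℝ) ^ (m k))) * (∏ k, ((m k : ℝ))) *
            (‖T‖ * ∏ k, weakNorm 𝕜 1 (x k)) ^ q := by
          rw [Finset.sum_const, Finset.sum_const, Finset.card_univ, Finset.card_univ,
            nsmul_eq_mul, nsmul_eq_mul, hcardε, hcardj]
          ring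
  -- combine
  have hSle : (∑ j : ∀ k, Fin (m k), ‖T (fun k => x k (j k))‖ ^ q)
      ≤ (K ^ q) ^ n * (‖T‖ * ∏ k, weakNorm 𝕜 1 (x k)) ^ q := by
    have h1 : (∏ k, ((2:ℝ) ^ (m k))) * (∑ j : ∀ k, Fin (m k), ‖T (fun k => x k (j k))‖ ^ q)
        ≤ (K ^ q) ^ n * ((∏ k, ((m k:ℝ))⁻¹) * ((∏ k, ((2:ℝ) ^ (m k))) * (∏ k, ((m k : ℝ))) *
            (‖T‖ * ∏ k, weakNorm 𝕜 1 (x k)) ^ q)) := by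
      calc (∏ k, ((2:ℝ) ^ (m k))) * (∑ j : ∀ k, Fin (m k), ‖T (fun k => x k (j k))‖ ^ q)
          = H ∅ := hHempty.symm
        _ ≤ (K ^ q) ^ n * H Finset.univ := hfinal1
        _ ≤ _ := mul_le_mul_of_nonneg_left hHuniv (pow_nonneg hKq0 n)
    have hPminv : (∏ k, ((m k:ℝ))⁻¹) = (∏ k, ((m k : ℝ)))⁻¹ := by
      rw [← Finset.prod_inv_distrib]
    rw [hPminv] at h1
    have h2 : (K ^ q) ^ n * ((∏ k, ((m k : ℝ)))⁻¹ * ((∏ k, ((2:ℝ) ^ (m k))) * (∏ k, ((m k : ℝ))) *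
        (‖T‖ * ∏ k, weakNorm 𝕜 1 (x k)) ^ q))
        = (∏ k, ((2:ℝ) ^ (m k))) * ((K ^ q) ^ n * (‖T‖ * ∏ k, weakNorm 𝕜 1 (x k)) ^ q) := by
      field_simp
    rw [h2] at h1
    exact le_of_mul_le_mul_left h1 hP2
  -- final algebra
  have hpow : (K ^ q) ^ n = (K ^ n : ℝ) ^ q := by
    rw [← Real.rpow_natCast (K ^ q) n, ← Real.rpow_natCast K n,
      ← Real.rpow_mul hK, ← Real.rpow_mul hK, mul_comm]
  calc (∑ j : ∀ k, Fin (m k), ‖T (fun k => x k (j k))‖ ^ q)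
      ≤ (K ^ q) ^ n * (‖T‖ * ∏ k, weakNorm 𝕜 1 (x k)) ^ q := hSle
    _ = (K ^ n : ℝ) ^ q * (‖T‖ * ∏ k, weakNorm 𝕜 1 (x k)) ^ q := by rw [hpow]
    _ = (K ^ n * (‖T‖ * ∏ k, weakNorm 𝕜 1 (x k))) ^ q :=
        (Real.mul_rpow (pow_nonneg hK n) hC₀0).symm
    _ = (K ^ n * ‖T‖ * ∏ k, weakNorm 𝕜 1 (x k)) ^ q := by rw [mul_assoc]
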